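/- Let S₀ ⊆ {1,…,p} be nonempty with s₀ := |S₀|, and let b⁰ ∈ ℝ^p be supported on S₀ with Xb⁰ the orthogonal projection of f⁰ onto span{ψ_j : j ∈ S₀}. Let β ∈ ℝ^p, set δ₂ := ‖β − b⁰‖_2, let δ > 0, S^δ := {j : |β_j| > δ}, and let f_{S^δ} denote the orthogonal projection of f⁰ onto span{ψ_j : j ∈ S^δ}. Let Λ_s ≥ 0 satisfy ‖Xγ‖_n ≤ Λ_s‖γ‖_2 for every γ ∈ ℝ^p supported on an index set of cardinality at most s₀. Then ‖f_{S^δ} − f⁰‖_n ≤ ‖Xβ_{S^δ} − f⁰‖_n ≤ ‖Xb⁰ − f⁰‖_n + √⌈δ₂²/(δ²·s₀) + 1⌉ · Λ_s · (2δ₂ + δ√s₀). -/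

import Mathlib

open Finset

lemma sqrt_sum_sq_add_le (n : ℕ) (u v : Fin n → ℝ) :
    Real.sqrt (∑ i, (u i + v i) ^ 2) ≤ Real.sqrt (∑ i, (u i) ^ 2) + Real.sqrt (∑ i, (v i) ^ 2) := by
  have h := norm_add_le (E := EuclideanSpace ℝ (Fin n)) (WithLp.toLp 2 u) (WithLp.toLp 2 v)
  simp only [EuclideanSpace.norm_eq, Real.norm_eq_abs, sq_abs, WithLp.ofLp_add, WithLp.ofLp_toLp, Pi.add_apply] at h
  convert h using 3

lemma sqrt_sum_sq_add_le_div (n : ℕ) (u v : Fin n → ℝ) :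
    Real.sqrt ((∑ i, (u i + v i) ^ 2) / n) ≤ Real.sqrt ((∑ i, (u i) ^ 2) / n) + Real.sqrt ((∑ i, (v i) ^ 2) / n) := by
  rw [Real.sqrt_div (by positivity) n, Real.sqrt_div (by positivity) n, Real.sqrt_div (by positivity) n,
    ← add_div]
  gcongr
  exact sqrt_sum_sq_add_le n u v

lemma cs_step (N : ℕ) (a b : ℝ) (ha : 0 ≤ a) (hb : 0 ≤ b) :
    a + Real.sqrt N * b ≤ Real.sqrt (N + 1) * Real.sqrt (a ^ 2 + b ^ 2) := by
  rw [← Real.sqrt_mul (by positivity)]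
  apply (Real.le_sqrt (by positivity) (by positivity)).mpr
  have h1 : Real.sqrt N ^ 2 = (N : ℝ) := Real.sq_sqrt (by positivity)
  nlinarith [sq_nonneg (Real.sqrt N * a - b)]

lemma sqrt_sq_add_sq_le (a b : ℝ) (ha : 0 ≤ a) (hb : 0 ≤ b) :
    Real.sqrt (a ^ 2 + b ^ 2) ≤ a + b := by
  have : a ^ 2 + b ^ 2 ≤ (a + b) ^ 2 := by nlinarith
  calc Real.sqrt (a ^ 2 + b ^ 2) ≤ Real.sqrt ((a + b) ^ 2) := Real.sqrt_le_sqrt this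
    _ = a + b := Real.sqrt_sq (by linarith)

lemma sparse_block_bound (n p : ℕ) (X : Matrix (Fin n) (Fin p) ℝ) (s₀ : ℕ) (Λs : ℝ) (hΛs0 : 0 ≤ Λs)
    (hΛs : ∀ T : Finset (Fin p), T.card ≤ s₀ → ∀ γ : Fin p → ℝ, (∀ j ∉ T, γ j = 0) →
      Real.sqrt ((∑ i, (X.mulVec γ i) ^ 2) / n) ≤ Λs * Real.sqrt (∑ j, (γ j) ^ 2)) :
    ∀ N : ℕ, ∀ γ : Fin p → ℝ, (Finset.univ.filter (fun j => γ j ≠ 0)).card ≤ N * s₀ →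
      Real.sqrt ((∑ i, (X.mulVec γ i) ^ 2) / n) ≤ Real.sqrt N * Λs * Real.sqrt (∑ j, (γ j) ^ 2) := by
  intro N
  induction N with
  | zero =>
    intro γ hcard
    have hγ : ∀ j, γ j = 0 := by
      intro j
      by_contra h
      have : j ∈ Finset.univ.filter (fun j => γ j ≠ 0) := by simp [h]
      have := Finset.card_pos.mpr ⟨j, this⟩
      omega
    have h0 : ∀ i, X.mulVec γ i = 0 := by
      intro i; simp [Matrix.mulVec, dotProduct, hγ]
    simp [h0, hγ]
  | succ N ih =>
    intro γ hcard
    set T := Finset.univ.filter (fun j => γ j ≠ 0) with hT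
    have hsqrtpos : (1 : ℝ) ≤ Real.sqrt ((N : ℝ) + 1) := by
      rw [Real.one_le_sqrt]; linarith [Nat.cast_nonneg (α := ℝ) N]
    by_cases hTs : T.card ≤ s₀
    · have h := hΛs T hTs γ (fun j hj => by simpa [hT] using hj)
      calc Real.sqrt ((∑ i, (X.mulVec γ i) ^ 2) / n) ≤ Λs * Real.sqrt (∑ j, (γ j) ^ 2) := h
        _ ≤ Real.sqrt ((N : ℝ) + 1) * Λs * Real.sqrt (∑ j, (γ j) ^ 2) := by
            have : (0:ℝ) ≤ Real.sqrt (∑ j, (γ j) ^ 2) := Real.sqrt_nonneg _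
            nlinarith [mul_nonneg hΛs0 this]
        _ = Real.sqrt ((N + 1 : ℕ) : ℝ) * Λs * Real.sqrt (∑ j, (γ j) ^ 2) := by push_cast; ring
    · push_neg at hTs
      obtain ⟨A, hAsub, hAcard⟩ := Finset.exists_subset_card_eq hTs.le
      set γA := fun j => if j ∈ A then γ j else 0 with hγA
      set γB := fun j => if j ∈ A then 0 else γ j with hγB
      have hfun : γ = γA + γB := funext fun j => by
        by_cases h : j ∈ A <;> simp [hγA, hγB, h]
      have hBsub : Finset.univ.filter (fun j => γB j ≠ 0) ⊆ T \ A := by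
        intro j hj
        simp only [hγB, Finset.mem_filter, Finset.mem_univ, true_and] at hj
        by_cases h : j ∈ A
        · simp [h] at hj
        · simp [h] at hj
          simp [Finset.mem_sdiff, hT, h, hj]
      have hBcard : (Finset.univ.filter (fun j => γB j ≠ 0)).card ≤ N * s₀ := by
        have h1 := Finset.card_le_card hBsub
        have h2 : (T \ A).card = T.card - s₀ := by rw [Finset.card_sdiff_of_subset hAsub, hAcard]
        have hm : (N+1)*s₀ = N*s₀ + s₀ := by ring
        omega
      have hB := ih γB hBcard
      have hA := hΛs A (hAcard ▸ le_refl _) γA (fun j hj => by simp [hγA, hj])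
      have htri : Real.sqrt ((∑ i, (X.mulVec γ i) ^ 2) / n)
          ≤ Real.sqrt ((∑ i, (X.mulVec γA i) ^ 2) / n) + Real.sqrt ((∑ i, (X.mulVec γB i) ^ 2) / n) := by
        have := sqrt_sum_sq_add_le_div n (X.mulVec γA) (X.mulVec γB)
        rw [hfun, Matrix.mulVec_add]
        simpa using this
      set a := Real.sqrt (∑ j, (γA j) ^ 2) with haa
      set b := Real.sqrt (∑ j, (γB j) ^ 2) with hbb
      have hsumsq : (∑ j, (γ j) ^ 2) = a ^ 2 + b ^ 2 := by
        rw [haa, hbb, Real.sq_sqrt (by positivity), Real.sq_sqrt (by positivity),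
          ← Finset.sum_add_distrib]
        apply Finset.sum_congr rfl
        intro j _
        by_cases h : j ∈ A <;> simp [hγA, hγB, h]
      have hcs := cs_step N a b (Real.sqrt_nonneg _) (Real.sqrt_nonneg _)
      calc Real.sqrt ((∑ i, (X.mulVec γ i) ^ 2) / n)
          ≤ Real.sqrt ((∑ i, (X.mulVec γA i) ^ 2) / n) + Real.sqrt ((∑ i, (X.mulVec γB i) ^ 2) / n) := htri
        _ ≤ Λs * a + Real.sqrt N * Λs * b := add_le_add hA hB
        _ = Λs * (a + Real.sqrt N * b) := by ring
        _ ≤ Λs * (Real.sqrt ((N : ℝ) + 1) * Real.sqrt (a ^ 2 + b ^ 2)) :=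
            mul_le_mul_of_nonneg_left hcs hΛs0
        _ = Real.sqrt ((N + 1 : ℕ) : ℝ) * Λs * Real.sqrt (∑ j, (γ j) ^ 2) := by
            rw [hsumsq]; push_cast; ring

/-- Prediction-error inequality of Lemma `betterthres` for the refitted thresholded Lasso. -/
theorem thresholded_prediction_error
    (n p : ℕ) (hn : 0 < n)
    (X : Matrix (Fin n) (Fin p) ℝ) (f0 : Fin n → ℝ)
    (S0 : Finset (Fin p)) (hS0 : S0.Nonempty)
    (b0 : Fin p → ℝ)
    (hb0supp : ∀ j ∉ S0, b0 j = 0)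
    (hb0proj : ∀ j ∈ S0, ∑ i, (X.mulVec b0 i - f0 i) * X i j = 0)
    (β : Fin p → ℝ)
    (δ2 : ℝ) (hδ2 : δ2 = Real.sqrt (∑ j, (β j - b0 j) ^ 2))
    (δ : ℝ) (hδ : 0 < δ)
    (Sδ : Finset (Fin p)) (hSδ : ∀ j, j ∈ Sδ ↔ δ < |β j|)
    -- `X.mulVec c` is the orthogonal projection of `f0` onto `span {ψ_j : j ∈ Sδ}`
    (c : Fin p → ℝ)
    (hcsupp : ∀ j ∉ Sδ, c j = 0)
    (hcproj : ∀ j ∈ Sδ, ∑ i, (X.mulVec c i - f0 i) * X i j = 0)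
    (Λs : ℝ) (hΛs0 : 0 ≤ Λs)
    (hΛs : ∀ T : Finset (Fin p), T.card ≤ S0.card →
      ∀ γ : Fin p → ℝ, (∀ j ∉ T, γ j = 0) →
      Real.sqrt ((∑ i, (X.mulVec γ i) ^ 2) / n) ≤ Λs * Real.sqrt (∑ j, (γ j) ^ 2)) :
    Real.sqrt ((∑ i, (X.mulVec c i - f0 i) ^ 2) / n)
        ≤ Real.sqrt ((∑ i, (X.mulVec (fun j => if j ∈ Sδ then β j else 0) i - f0 i) ^ 2) / n)
      ∧ Real.sqrt ((∑ i, (X.mulVec (fun j => if j ∈ Sδ then β j else 0) i - f0 i) ^ 2) / n)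
        ≤ Real.sqrt ((∑ i, (X.mulVec b0 i - f0 i) ^ 2) / n)
          + Real.sqrt ((⌈δ2 ^ 2 / (δ ^ 2 * S0.card) + 1⌉₊ : ℝ)) * Λs
              * (2 * δ2 + δ * Real.sqrt (S0.card)) := by
  set βS := fun j => if j ∈ Sδ then β j else 0 with hβS
  have hδ2nonneg : 0 ≤ δ2 := hδ2 ▸ Real.sqrt_nonneg _
  have hδ2sq : δ2 ^ 2 = ∑ j, (β j - b0 j) ^ 2 := by
    rw [hδ2, Real.sq_sqrt (by positivity)]
  have hnpos : (0:ℝ) < n := by exact_mod_cast hn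
  constructor
  · -- Part 1: projection is best approximation in the span
    -- cross term is zero
    have cross : ∀ d : Fin p → ℝ, (∀ j ∉ Sδ, d j = 0) →
        ∑ i, X.mulVec d i * (X.mulVec c i - f0 i) = 0 := by
      intro d hd
      have step : ∀ i, X.mulVec d i * (X.mulVec c i - f0 i)
          = ∑ j, d j * ((X.mulVec c i - f0 i) * X i j) := by
        intro i
        rw [Matrix.mulVec, dotProduct, Finset.sum_mul]
        exact Finset.sum_congr rfl fun j _ => by ring
      calc ∑ i, X.mulVec d i * (X.mulVec c i - f0 i)
          = ∑ i, ∑ j, d j * ((X.mulVec c i - f0 i) * X i j) := Finset.sum_congr rfl fun i _ => step i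
        _ = ∑ j, ∑ i, d j * ((X.mulVec c i - f0 i) * X i j) := Finset.sum_comm
        _ = ∑ j, d j * ∑ i, (X.mulVec c i - f0 i) * X i j := by
            exact Finset.sum_congr rfl fun j _ => (Finset.mul_sum _ _ _).symm
        _ = 0 := Finset.sum_eq_zero fun j _ => by
            by_cases h : j ∈ Sδ
            · rw [hcproj j h, mul_zero]
            · rw [hd j h, zero_mul]
    set d := fun j => βS j - c j with hd
    have hdsupp : ∀ j ∉ Sδ, d j = 0 := by
      intro j hj; simp [hd, hβS, hj, hcsupp j hj]
    have hXβ : ∀ i, X.mulVec βS i = X.mulVec d i + X.mulVec c i := by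
      intro i
      have : βS = d + c := funext fun j => by simp [hd]
      rw [this, Matrix.mulVec_add]; rfl
    have key : ∑ i, (X.mulVec c i - f0 i) ^ 2 ≤ ∑ i, (X.mulVec βS i - f0 i) ^ 2 := by
      have hexp : ∑ i, (X.mulVec βS i - f0 i) ^ 2
          = ∑ i, (X.mulVec d i) ^ 2 + 2 * ∑ i, X.mulVec d i * (X.mulVec c i - f0 i)
            + ∑ i, (X.mulVec c i - f0 i) ^ 2 := by
        rw [Finset.mul_sum, ← Finset.sum_add_distrib, ← Finset.sum_add_distrib]
        exact Finset.sum_congr rfl fun i _ => by rw [hXβ i]; ring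
      have hpos : (0:ℝ) ≤ ∑ i, (X.mulVec d i) ^ 2 := by positivity
      rw [hexp, cross d hdsupp]
      linarith
    apply Real.sqrt_le_sqrt
    gcongr
  · -- Part 2
    set s₀ := S0.card with hs₀
    have hs₀pos : 0 < s₀ := Finset.card_pos.mpr hS0
    set N := ⌈δ2 ^ 2 / (δ ^ 2 * s₀) + 1⌉₊ with hN
    set γ := fun j => βS j - b0 j with hγ
    -- support bound
    have hsupp : (Finset.univ.filter (fun j => γ j ≠ 0)) ⊆ (Sδ \ S0) ∪ S0 := by
      intro j hj
      simp only [Finset.mem_filter, Finset.mem_univ, true_and] at hj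
      simp only [Finset.mem_union, Finset.mem_sdiff]
      by_cases h0 : j ∈ S0
      · exact Or.inr h0
      · left
        refine ⟨?_, h0⟩
        by_contra hs
        exact hj (by simp [hγ, hβS, hs, hb0supp j h0])
    have hKreal : (δ:ℝ) ^ 2 * ((Sδ \ S0).card : ℝ) ≤ δ2 ^ 2 := by
      have h1 : ∑ j ∈ Sδ \ S0, (δ:ℝ) ^ 2 ≤ ∑ j ∈ Sδ \ S0, (β j - b0 j) ^ 2 := by
        apply Finset.sum_le_sum
        intro j hj
        obtain ⟨hjS, hjS0⟩ := Finset.mem_sdiff.mp hj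
        have hb : b0 j = 0 := hb0supp j hjS0
        have hβj : δ < |β j| := (hSδ j).mp hjS
        have : δ ^ 2 ≤ |β j| ^ 2 := by nlinarith [abs_nonneg (β j)]
        rw [hb]; rw [sq_abs] at this; linarith [this]
      have h2 : ∑ j ∈ Sδ \ S0, (β j - b0 j) ^ 2 ≤ ∑ j, (β j - b0 j) ^ 2 :=
        Finset.sum_le_sum_of_subset_of_nonneg (Finset.subset_univ _) (fun j _ _ => by positivity)
      rw [Finset.sum_const, nsmul_eq_mul] at h1
      rw [hδ2sq]
      linarith
    have hcardN : (Finset.univ.filter (fun j => γ j ≠ 0)).card ≤ N * s₀ := by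
      have hcard1 : (Finset.univ.filter (fun j => γ j ≠ 0)).card ≤ (Sδ \ S0).card + s₀ :=
        le_trans (Finset.card_le_card hsupp) (Finset.card_union_le _ _)
      have hceil : (δ2 ^ 2 / (δ ^ 2 * s₀) + 1 : ℝ) ≤ (N : ℝ) := Nat.le_ceil _
      have hs₀real : (0:ℝ) < (s₀ : ℝ) := by exact_mod_cast hs₀pos
      -- real inequality
      have hreal : ((Sδ \ S0).card : ℝ) + s₀ ≤ (N : ℝ) * s₀ := by
        have hK : ((Sδ \ S0).card : ℝ) ≤ δ2 ^ 2 / δ ^ 2 := by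
          rw [le_div_iff₀ (by positivity)]
          linarith [hKreal]
        have heq : (δ2 ^ 2 / (δ ^ 2 * s₀) + 1) * s₀ = δ2 ^ 2 / δ ^ 2 + s₀ := by
          field_simp
        nlinarith [hceil, hs₀real]
      have : ((Finset.univ.filter (fun j => γ j ≠ 0)).card : ℝ) ≤ (N : ℝ) * s₀ := by
        calc ((Finset.univ.filter (fun j => γ j ≠ 0)).card : ℝ)
            ≤ ((Sδ \ S0).card : ℝ) + s₀ := by exact_mod_cast hcard1
          _ ≤ (N : ℝ) * s₀ := hreal
      exact_mod_cast this
    -- norm of γ bound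
    have hγnorm : Real.sqrt (∑ j, (γ j) ^ 2) ≤ 2 * δ2 + δ * Real.sqrt s₀ := by
      set r := fun j => if j ∈ Sδ then (0:ℝ) else β j with hr
      have hsplit : ∀ j, γ j = (β j - b0 j) + (- r j) := by
        intro j
        by_cases h : j ∈ Sδ <;> simp [hγ, hβS, hr, h] <;> ring
      have htri : Real.sqrt (∑ j, (γ j) ^ 2)
          ≤ Real.sqrt (∑ j, (β j - b0 j) ^ 2) + Real.sqrt (∑ j, (- r j) ^ 2) := by
        have := sqrt_sum_sq_add_le p (fun j => β j - b0 j) (fun j => - r j)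
        calc Real.sqrt (∑ j, (γ j) ^ 2)
            = Real.sqrt (∑ j, ((β j - b0 j) + (- r j)) ^ 2) := by
              congr 1; exact Finset.sum_congr rfl fun j _ => by rw [hsplit j]
          _ ≤ _ := this
      have hrneg : ∑ j, (- r j) ^ 2 = ∑ j, (r j) ^ 2 := by
        exact Finset.sum_congr rfl fun j _ => by ring
      have hrsum : ∑ j, (r j) ^ 2 ≤ δ2 ^ 2 + δ ^ 2 * s₀ := by
        have hpt : ∀ j, (r j) ^ 2 ≤ (β j - b0 j) ^ 2 + (if j ∈ S0 then δ ^ 2 else 0) := by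
          intro j
          by_cases h : j ∈ Sδ
          · simp only [hr, h, if_true]
            have : (0:ℝ) ≤ if j ∈ S0 then δ ^ 2 else 0 := by positivity
            nlinarith [sq_nonneg (β j - b0 j)]
          · simp only [hr, h, if_false]
            have hβj : |β j| ≤ δ := le_of_not_gt (fun hc => h ((hSδ j).mpr hc))
            by_cases h0 : j ∈ S0
            · simp only [h0, if_true]
              have : β j ^ 2 ≤ δ ^ 2 := by nlinarith [abs_nonneg (β j), sq_abs (β j)]
              nlinarith [sq_nonneg (β j - b0 j)]
            · simp [hb0supp j h0, h0]
        calc ∑ j, (r j) ^ 2 ≤ ∑ j, ((β j - b0 j) ^ 2 + (if j ∈ S0 then δ ^ 2 else 0)) :=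
              Finset.sum_le_sum fun j _ => hpt j
          _ = (∑ j, (β j - b0 j) ^ 2) + ∑ j, (if j ∈ S0 then δ ^ 2 else 0) := Finset.sum_add_distrib
          _ = δ2 ^ 2 + δ ^ 2 * s₀ := by
              rw [← hδ2sq]
              congr 1
              rw [Finset.sum_ite_mem, Finset.univ_inter, Finset.sum_const, nsmul_eq_mul]
              ring
      have hrbound : Real.sqrt (∑ j, (r j) ^ 2) ≤ δ2 + δ * Real.sqrt s₀ := by
        have h1 : Real.sqrt (∑ j, (r j) ^ 2) ≤ Real.sqrt (δ2 ^ 2 + (δ * Real.sqrt s₀) ^ 2) := by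
          apply Real.sqrt_le_sqrt
          have : (δ * Real.sqrt s₀) ^ 2 = δ ^ 2 * s₀ := by
            rw [mul_pow, Real.sq_sqrt (by positivity)]
          rw [this]; exact hrsum
        exact le_trans h1 (sqrt_sq_add_sq_le _ _ hδ2nonneg (by positivity))
      calc Real.sqrt (∑ j, (γ j) ^ 2)
          ≤ Real.sqrt (∑ j, (β j - b0 j) ^ 2) + Real.sqrt (∑ j, (- r j) ^ 2) := htri
        _ = δ2 + Real.sqrt (∑ j, (r j) ^ 2) := by rw [← hδ2, hrneg]
        _ ≤ δ2 + (δ2 + δ * Real.sqrt s₀) := by linarith [hrbound]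
        _ = 2 * δ2 + δ * Real.sqrt s₀ := by ring
    -- block bound
    have hblock := sparse_block_bound n p X s₀ Λs hΛs0 hΛs N γ hcardN
    -- triangle
    have hfun2 : βS = b0 + γ := funext fun j => by simp [hγ]
    have htri2 : Real.sqrt ((∑ i, (X.mulVec βS i - f0 i) ^ 2) / n)
        ≤ Real.sqrt ((∑ i, (X.mulVec b0 i - f0 i) ^ 2) / n)
          + Real.sqrt ((∑ i, (X.mulVec γ i) ^ 2) / n) := by
      have h := sqrt_sum_sq_add_le_div n (fun i => X.mulVec b0 i - f0 i) (X.mulVec γ)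
      have heq : ∀ i, X.mulVec βS i - f0 i = (X.mulVec b0 i - f0 i) + X.mulVec γ i := by
        intro i
        rw [hfun2, Matrix.mulVec_add]
        simp [Pi.add_apply]; ring
      calc Real.sqrt ((∑ i, (X.mulVec βS i - f0 i) ^ 2) / n)
          = Real.sqrt ((∑ i, ((X.mulVec b0 i - f0 i) + X.mulVec γ i) ^ 2) / n) := by
            congr 2; exact Finset.sum_congr rfl fun i _ => by rw [heq i]
        _ ≤ _ := h
    have hfinal : Real.sqrt ((∑ i, (X.mulVec γ i) ^ 2) / n)
        ≤ Real.sqrt (N : ℝ) * Λs * (2 * δ2 + δ * Real.sqrt s₀) := by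
      calc Real.sqrt ((∑ i, (X.mulVec γ i) ^ 2) / n)
          ≤ Real.sqrt (N : ℝ) * Λs * Real.sqrt (∑ j, (γ j) ^ 2) := hblock
        _ ≤ Real.sqrt (N : ℝ) * Λs * (2 * δ2 + δ * Real.sqrt s₀) := by
            apply mul_le_mul_of_nonneg_left hγnorm (by positivity)
    calc Real.sqrt ((∑ i, (X.mulVec βS i - f0 i) ^ 2) / n)
        ≤ Real.sqrt ((∑ i, (X.mulVec b0 i - f0 i) ^ 2) / n)
          + Real.sqrt ((∑ i, (X.mulVec γ i) ^ 2) / n) := htri2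
      _ ≤ Real.sqrt ((∑ i, (X.mulVec b0 i - f0 i) ^ 2) / n)
          + Real.sqrt (N : ℝ) * Λs * (2 * δ2 + δ * Real.sqrt s₀) := by linarith [hfinal]
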